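/- For every positive integer n, the pair x = (1 + 1/n)^n, y = (1 + 1/n)^(n+1) consists of rational numbers satisfying x^y = y^x. -/

import Mathlib

theorem stmt_4 (n : ℕ) (hn : 0 < n) :
    ∃ x y : ℚ, x = (1 + 1 / (n : ℚ)) ^ n ∧ y = (1 + 1 / (n : ℚ)) ^ (n + 1) ∧
      (x : ℝ) ^ (y : ℝ) = (y : ℝ) ^ (x : ℝ) := by
  refine ⟨(1 + 1 / (n : ℚ)) ^ n, (1 + 1 / (n : ℚ)) ^ (n + 1), rfl, rfl, ?_⟩
  have hn' : (0 : ℝ) < n := by exact_mod_cast hn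
  set a : ℝ := 1 + 1 / (n : ℝ) with ha
  have hcast : ∀ k : ℕ, (((1 + 1 / (n : ℚ)) ^ k : ℚ) : ℝ) = a ^ k := by
    intro k; push_cast; rfl
  rw [hcast, hcast]
  have hapos : 0 < a := by positivity
  have hna : (n : ℝ) * a = n + 1 := by
    rw [ha, mul_add, mul_one, mul_one_div_cancel hn'.ne']
  rw [← Real.rpow_natCast a n, ← Real.rpow_natCast a (n + 1),
    ← Real.rpow_mul hapos.le, ← Real.rpow_mul hapos.le]
  congr 1
  have h1 : a ^ ((n : ℝ) + 1) = a ^ (n : ℝ) * a := by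
    rw [Real.rpow_add hapos, Real.rpow_one]
  push_cast
  rw [h1]
  linear_combination a ^ (n : ℝ) * hna
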